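/- Let k be a field of characteristic p > 0. The truncated polynomial algebra k[x]/(x^{p−1}) is not isomorphic to the (non-complete) Jacobian algebra J(Q,W) = kQ/(∂_a W : a ∈ Q_1) for Q the quiver with one vertex and one loop x and any potential W ∈ k[x]·x³ given by a polynomial in the loop. Equivalently: there is no polynomial W(x) with only terms of degree ≥ 3 such that the ideal (W'(x) − (terms from cyclic derivative)) equals (x^{p−1}); concretely, for W = ∑_{n≥3} λ_n x^n, the cyclic derivative is ∂_x W = ∑_{n≥3} n λ_n x^{n−1}, and since p divides p, the coefficient of x^{p−1} in ∂_x W is p·λ_p = 0, so (∂_x W) ≠ (x^{p−1}). -/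
import Mathlib


open Polynomial

/-- Let `k` be a field of characteristic `p > 0`.  The truncated
polynomial algebra `k[x]/(x^{p−1})` is not isomorphic to the (non-complete) Jacobian
algebra `J(Q,W) = k[x]/(∂_x W)` of the one-loop quiver for any potential
`W = ∑_{n ≥ 3} λ_n x^n` (a polynomial whose terms all have degree ≥ 3, with cyclic
derivative `∂_x W = W' = ∑ n λ_n x^{n-1}`). -/
theorem stmt14 (k : Type*) [Field k] (p : ℕ) [CharP k p] (hp : 0 < p)
    (W : Polynomial k) (hW : ∀ n < 3, W.coeff n = 0) :
    IsEmpty ((Polynomial k ⧸ Ideal.span {Polynomial.derivative W}) ≃ₐ[k]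
      (Polynomial k ⧸ Ideal.span {(Polynomial.X : Polynomial k) ^ (p - 1)})) := by
  rw [← not_nonempty_iff]
  rintro ⟨e⟩
  have hprime : p.Prime := (CharP.char_is_prime_or_zero k p).resolve_right (by omega)
  have hp2 : 2 ≤ p := hprime.two_le
  set g : Polynomial k := derivative W with hgdef
  set I : Ideal (Polynomial k) := Ideal.span {g} with hIdef
  set J : Ideal (Polynomial k) := Ideal.span {(X : Polynomial k) ^ (p - 1)} with hJdef
  -- the coefficient of g at degree p-1 vanishes (characteristic p)
  have hcoeffg : g.coeff (p - 1) = 0 := by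
    have h1 : (p - 1) + 1 = p := Nat.succ_pred_eq_of_pos hp
    rw [hgdef, coeff_derivative, h1]
    have h2 : ((p - 1 : ℕ) : k) + 1 = 0 := by
      rw [show ((p - 1 : ℕ) : k) + 1 = (((p - 1) + 1 : ℕ) : k) by push_cast; ring, h1,
        CharP.cast_eq_zero]
    rw [h2, mul_zero]
  -- basic facts in the target quotient
  have hXJ : (Ideal.Quotient.mk J) ((X : Polynomial k) ^ (p - 1)) = 0 := by
    rw [Ideal.Quotient.eq_zero_iff_mem, hJdef]
    exact Ideal.subset_span rfl
  have hXpow : (Ideal.Quotient.mk J) ((X : Polynomial k) ^ (p - 2)) ≠ 0 := by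
    intro hz
    rw [Ideal.Quotient.eq_zero_iff_mem, hJdef, Ideal.mem_span_singleton] at hz
    have hdvd := hz
    have hne : ((X : Polynomial k) ^ (p - 2)) ≠ 0 := pow_ne_zero _ X_ne_zero
    have := Polynomial.natDegree_le_of_dvd hdvd hne
    simp only [natDegree_pow, natDegree_X, mul_one] at this
    omega
  haveI : Nontrivial (Polynomial k ⧸ J) := ⟨_, 0, hXpow⟩
  -- u := image of X under the isomorphism
  set u : Polynomial k ⧸ J := e (Ideal.Quotient.mk I X) with hu
  obtain ⟨f, hf⟩ := Ideal.Quotient.mk_surjective (I := J) u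
  set a : k := f.coeff 0 with ha
  set n : Polynomial k ⧸ J := u - algebraMap k _ a with hn
  have hmkC : ∀ b : k, (Ideal.Quotient.mk J) (C b) = algebraMap k (Polynomial k ⧸ J) b :=
    fun b => rfl
  have hmkCI : ∀ b : k, (Ideal.Quotient.mk I) (C b) = algebraMap k (Polynomial k ⧸ I) b :=
    fun b => rfl
  -- n is nilpotent: n ^ (p-1) = 0
  obtain ⟨q, hq⟩ : (X : Polynomial k) ∣ (f - C a) := by
    rw [X_dvd_iff]
    simp [ha]
  have hnmk : n = (Ideal.Quotient.mk J) (f - C a) := by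
    rw [map_sub, hf, hmkC, hn]
  have hniln : n ^ (p - 1) = 0 := by
    rw [hnmk, ← map_pow, hq, mul_pow, map_mul, hXJ, zero_mul]
  -- e sends mk I (X - C a) to n
  have hen : e ((Ideal.Quotient.mk I) (X - C a)) = n := by
    rw [map_sub, hmkCI, map_sub, e.commutes, hn, hu]
  -- first divisibility: g ∣ (X - C a) ^ (p-1)
  have hdvd1 : g ∣ (X - C a) ^ (p - 1) := by
    have h0 : e ((Ideal.Quotient.mk I) ((X - C a) ^ (p - 1))) = 0 := by
      rw [map_pow, map_pow, hen, hniln]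
    have h1 : (Ideal.Quotient.mk I) ((X - C a) ^ (p - 1)) = 0 :=
      e.injective (by rw [h0, map_zero])
    rwa [Ideal.Quotient.eq_zero_iff_mem, hIdef, Ideal.mem_span_singleton] at h1
  -- surjectivity of aeval n
  have hsurj_u : Function.Surjective (aeval u : Polynomial k →ₐ[k] Polynomial k ⧸ J) := by
    have heq : (aeval u : Polynomial k →ₐ[k] Polynomial k ⧸ J) =
        (e : (Polynomial k ⧸ I) ≃ₐ[k] (Polynomial k ⧸ J)).toAlgHom.comp
          (Ideal.Quotient.mkₐ k I) := by
      apply Polynomial.algHom_ext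
      simp [hu]
    rw [heq]
    exact e.surjective.comp (Ideal.Quotient.mkₐ_surjective k I)
  have hsurj_n : Function.Surjective (aeval n : Polynomial k →ₐ[k] Polynomial k ⧸ J) := by
    intro b
    obtain ⟨h, hh⟩ := hsurj_u b
    refine ⟨h.comp (X + C a), ?_⟩
    rw [aeval_comp]
    have : (aeval n) (X + C a) = u := by
      rw [map_add, aeval_X, aeval_C, hn]
      ring
    rw [this, hh]
  -- write mk J X = n * w
  obtain ⟨h, hh⟩ := hsurj_n ((Ideal.Quotient.mk J) X)
  set h₀ : k := h.coeff 0 with hh₀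
  obtain ⟨q', hq'⟩ : (X : Polynomial k) ∣ (h - C h₀) := by
    rw [X_dvd_iff]; simp [hh₀]
  have hXdecomp : (Ideal.Quotient.mk J) X = algebraMap k _ h₀ + n * (aeval n) q' := by
    rw [← hh]
    have : h = C h₀ + (h - C h₀) := by ring
    conv_lhs => rw [this]
    rw [map_add, aeval_C, hq', map_mul, aeval_X]
  have hnilX : ((Ideal.Quotient.mk J) X) ^ (p - 1) = 0 := by
    rw [← map_pow, hXJ]
  have hh₀0 : h₀ = 0 := by
    have hnil : IsNilpotent (algebraMap k (Polynomial k ⧸ J) h₀) := by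
      have heq2 : algebraMap k (Polynomial k ⧸ J) h₀ =
          (Ideal.Quotient.mk J) X - n * (aeval n) q' := by
        rw [hXdecomp]; ring
      rw [heq2]
      have h1 : IsNilpotent ((Ideal.Quotient.mk J) X) := ⟨p - 1, hnilX⟩
      have h2 : IsNilpotent (n * (aeval n) q') := by
        exact ⟨p - 1, by rw [mul_pow, hniln, zero_mul]⟩
      exact (Commute.all _ _).isNilpotent_sub h1 h2
    obtain ⟨m, hm⟩ := hnil
    have : (algebraMap k (Polynomial k ⧸ J)) (h₀ ^ m) = 0 := by
      rw [map_pow]; exact hm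
    have hm0 : h₀ ^ m = 0 := by
      have hinj : Function.Injective (algebraMap k (Polynomial k ⧸ J)) :=
        (algebraMap k (Polynomial k ⧸ J)).injective
      exact hinj (by rw [this, map_zero])
    exact (pow_eq_zero_iff'.mp hm0).1
  have hXn : (Ideal.Quotient.mk J) X = n * (aeval n) q' := by
    rw [hXdecomp, hh₀0, map_zero, zero_add]
  -- second divisibility fails: ¬ g ∣ (X - C a) ^ (p-2)
  have hdvd2 : ¬ g ∣ (X - C a) ^ (p - 2) := by
    intro hd
    have h1 : (Ideal.Quotient.mk I) ((X - C a) ^ (p - 2)) = 0 := by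
      rw [Ideal.Quotient.eq_zero_iff_mem, hIdef, Ideal.mem_span_singleton]
      exact hd
    have h2 : n ^ (p - 2) = 0 := by
      rw [← hen, ← map_pow, ← map_pow, h1, map_zero]
    apply hXpow
    rw [map_pow, hXn, mul_pow, h2, zero_mul]
  -- conclude g is a unit multiple of (X - C a)^(p-1)
  have hprimeX : Prime (X - C a) := prime_X_sub_C a
  obtain ⟨i, hile, hassoc⟩ := (dvd_prime_pow hprimeX (p - 1)).mp hdvd1
  have hieq : i = p - 1 := by
    by_contra hne
    exact hdvd2 (hassoc.dvd.trans (pow_dvd_pow _ (by omega)))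
  subst hieq
  obtain ⟨v, hv⟩ := hassoc
  obtain ⟨c, hc, hcv⟩ := Polynomial.isUnit_iff.mp v.isUnit
  have hcoeff : (g * C c).coeff (p - 1) = ((X - C a) ^ (p - 1)).coeff (p - 1) := by
    rw [hcv, hv]
  have hmonic : ((X - C a) ^ (p - 1)).Monic := (monic_X_sub_C a).pow _
  have hdeg : ((X - C a) ^ (p - 1)).natDegree = p - 1 := by
    rw [natDegree_pow, natDegree_X_sub_C, mul_one]
  rw [coeff_mul_C, hcoeffg, zero_mul] at hcoeff
  have h1 := hmonic.coeff_natDegree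
  rw [hdeg] at h1
  rw [h1] at hcoeff
  exact one_ne_zero hcoeff.symm
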